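/- Let n ≥ 1, let F be an n×n real matrix, and let P be an n×n real symmetric positive definite matrix satisfying Fᵀ·P·F − P = −I_n. Let λ_min(P) and λ_max(P) denote the smallest and largest eigenvalues of P, set λ = 1 − 1/(2·λ_max(P)) and β = ‖P‖ + 2·‖P·F‖², where ‖·‖ is the operator norm induced by the Euclidean norm on ℝⁿ. Let x, G : ℕ → ℝⁿ satisfy x(t+1) = F·x(t) + G(t) for all t, and suppose there is α₁ ≥ 0 with ‖G(t)‖ ≤ α₁ for all t. Then limsup_{t→∞} ‖x(t)‖² ≤ β·α₁²/(λ_min(P)·(1 − λ)). -/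

import Mathlib

open Matrix

open Filter

section Lemma3Aux

variable {n : ℕ}

lemma clm_apply_eigenvectorBasis {P : Matrix (Fin n) (Fin n) ℝ} (hP : P.IsHermitian) (i : Fin n) :
    Matrix.toEuclideanCLM (𝕜 := ℝ) P (hP.eigenvectorBasis i) =
      hP.eigenvalues i • hP.eigenvectorBasis i := by
  have h := hP.mulVec_eigenvectorBasis i
  apply (WithLp.equiv 2 (Fin n → ℝ)).injective
  simpa using h

lemma adjoint_toEuclideanCLM (A : Matrix (Fin n) (Fin n) ℝ) :
    ContinuousLinearMap.adjoint (Matrix.toEuclideanCLM (𝕜 := ℝ) A) =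
      Matrix.toEuclideanCLM (𝕜 := ℝ) Aᵀ := by
  rw [← ContinuousLinearMap.star_eq_adjoint, ← map_star]
  congr 1

lemma inner_clm_self_eq {P : Matrix (Fin n) (Fin n) ℝ} (hP : P.IsHermitian)
    (hPs : P.IsSymm) (v : EuclideanSpace ℝ (Fin n)) :
    inner ℝ v (Matrix.toEuclideanCLM (𝕜 := ℝ) P v) =
      ∑ i, hP.eigenvalues i * (inner ℝ (hP.eigenvectorBasis i) v : ℝ) ^ 2 := by
  set b := hP.eigenvectorBasis
  set T := Matrix.toEuclideanCLM (𝕜 := ℝ) P with hT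
  have hadj : ContinuousLinearMap.adjoint T = T := by
    rw [hT, adjoint_toEuclideanCLM, hPs.eq]
  rw [← b.sum_inner_mul_inner v (T v)]
  refine Finset.sum_congr rfl fun i _ => ?_
  have h1 : (inner ℝ (b i) (T v) : ℝ) = hP.eigenvalues i * inner ℝ (b i) v := by
    conv_lhs => rw [← hadj]
    rw [ContinuousLinearMap.adjoint_inner_right, clm_apply_eigenvectorBasis hP i,
      real_inner_smul_left]
  rw [h1, real_inner_comm v (b i)]
  ring

lemma norm_sq_eq_sum_inner {v : EuclideanSpace ℝ (Fin n)}
    (b : OrthonormalBasis (Fin n) ℝ (EuclideanSpace ℝ (Fin n))) :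
    ‖v‖ ^ 2 = ∑ i, (inner ℝ (b i) v : ℝ) ^ 2 := by
  have h := b.sum_inner_mul_inner v v
  rw [← real_inner_self_eq_norm_sq, ← h]
  refine Finset.sum_congr rfl fun i _ => ?_
  rw [real_inner_comm v (b i)]
  ring

lemma quad_lower {P : Matrix (Fin n) (Fin n) ℝ} (hP : P.IsHermitian) (hPs : P.IsSymm)
    {a : ℝ} (ha : ∀ μ ∈ spectrum ℝ P, a ≤ μ) (v : EuclideanSpace ℝ (Fin n)) :
    a * ‖v‖ ^ 2 ≤ inner ℝ v (Matrix.toEuclideanCLM (𝕜 := ℝ) P v) := by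
  rw [inner_clm_self_eq hP hPs, norm_sq_eq_sum_inner hP.eigenvectorBasis, Finset.mul_sum]
  refine Finset.sum_le_sum fun i _ => ?_
  have := ha _ (hP.eigenvalues_mem_spectrum_real i)
  nlinarith [sq_nonneg (inner ℝ (hP.eigenvectorBasis i) v : ℝ)]

lemma quad_upper {P : Matrix (Fin n) (Fin n) ℝ} (hP : P.IsHermitian) (hPs : P.IsSymm)
    {c : ℝ} (hc : ∀ μ ∈ spectrum ℝ P, μ ≤ c) (v : EuclideanSpace ℝ (Fin n)) :
    inner ℝ v (Matrix.toEuclideanCLM (𝕜 := ℝ) P v) ≤ c * ‖v‖ ^ 2 := by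
  rw [inner_clm_self_eq hP hPs, norm_sq_eq_sum_inner hP.eigenvectorBasis, Finset.mul_sum]
  refine Finset.sum_le_sum fun i _ => ?_
  have := hc _ (hP.eigenvalues_mem_spectrum_real i)
  nlinarith [sq_nonneg (inner ℝ (hP.eigenvectorBasis i) v : ℝ)]

lemma pos_of_mem_spectrum_posDef {P : Matrix (Fin n) (Fin n) ℝ} (hPpd : P.PosDef)
    {μ : ℝ} (hμ : μ ∈ spectrum ℝ P) : 0 < μ := by
  rw [← AlgEquiv.spectrum_eq (Matrix.toLinAlgEquiv' (R := ℝ) (n := Fin n)),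
    ← Module.End.hasEigenvalue_iff_mem_spectrum] at hμ
  obtain ⟨v, hv⟩ := hμ.exists_hasEigenvector
  have hvne : v ≠ 0 := hv.right
  have happ : P *ᵥ v = μ • v := hv.apply_eq_smul
  have hpos := hPpd.dotProduct_mulVec_pos hvne
  rw [happ] at hpos
  have hd : 0 < dotProduct v v := by
    have hnn : 0 ≤ dotProduct v v := Finset.sum_nonneg fun i _ => mul_self_nonneg _
    have hne : dotProduct v v ≠ 0 := fun h => hvne (dotProduct_self_eq_zero.mp h)
    exact lt_of_le_of_ne hnn (Ne.symm hne)
  have hsv : star v = v := by funext i; simp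
  rw [hsv, dotProduct_smul] at hpos
  simp only [smul_eq_mul] at hpos
  nlinarith

lemma amgm_aux (a v : ℝ) : 2 * (a * v) ≤ v ^ 2 / 2 + 2 * a ^ 2 := by
  nlinarith [sq_nonneg (v - 2 * a)]

lemma geom_rec_bound {V : ℕ → ℝ} {lam c : ℝ} (hlam0 : 0 ≤ lam) (hlam1 : lam < 1)
    (hc : 0 ≤ c) (hrec : ∀ t, V (t + 1) ≤ lam * V t + c) (t : ℕ) :
    V t ≤ lam ^ t * V 0 + c / (1 - lam) := by
  have hne : (1 : ℝ) - lam ≠ 0 := by linarith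
  have hdiv : 0 ≤ c / (1 - lam) := div_nonneg hc (by linarith)
  induction t with
  | zero => simp; linarith
  | succ t ih =>
    have h1 : lam * V t ≤ lam * (lam ^ t * V 0 + c / (1 - lam)) :=
      mul_le_mul_of_nonneg_left ih hlam0
    have h2 := hrec t
    have expand : lam * (lam ^ t * V 0 + c / (1 - lam)) + c
        = lam ^ (t + 1) * V 0 + c / (1 - lam) := by
      rw [pow_succ]
      field_simp
      ring
    linarith

end Lemma3Aux

set_option maxHeartbeats 1000000 in
/-- Part 1) of Lemma 3: for `x(t+1) = F x(t) + G(t)` with `FᵀPF − P = −I`,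
a uniform bound `α₁` on the inputs gives
`limsup ‖x(t)‖² ≤ β α₁²/(λ_min(P)(1 − λ))`. -/
theorem limsup_norm_sq_bound_of_uniform
    (n : ℕ) (hn : 1 ≤ n)
    (F P : Matrix (Fin n) (Fin n) ℝ)
    (hPsymm : P.IsSymm) (hPpd : P.PosDef)
    (hLyap : Fᵀ * P * F - P = -(1 : Matrix (Fin n) (Fin n) ℝ))
    (lamMin lamMax lam beta : ℝ)
    (hlamMin : IsLeast (spectrum ℝ P) lamMin)
    (hlamMax : IsGreatest (spectrum ℝ P) lamMax)
    (hlam : lam = 1 - 1 / (2 * lamMax))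
    (hbeta : beta = ‖Matrix.toEuclideanCLM (𝕜 := ℝ) P‖ +
      2 * ‖Matrix.toEuclideanCLM (𝕜 := ℝ) (P * F)‖ ^ 2)
    (x G : ℕ → EuclideanSpace ℝ (Fin n))
    (hx : ∀ t, x (t + 1) = Matrix.toEuclideanCLM (𝕜 := ℝ) F (x t) + G t)
    (α₁ : ℝ) (hα₁ : 0 ≤ α₁) (hG : ∀ t, ‖G t‖ ≤ α₁) :
    limsup (fun t => ‖x t‖ ^ 2) atTop ≤ beta * α₁ ^ 2 / (lamMin * (1 - lam)) := by
  have hP : P.IsHermitian := hPpd.1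
  set TP := Matrix.toEuclideanCLM (𝕜 := ℝ) P with hTP
  set TF := Matrix.toEuclideanCLM (𝕜 := ℝ) F with hTF
  set TPF := Matrix.toEuclideanCLM (𝕜 := ℝ) (P * F) with hTPF
  have hlamMinpos : 0 < lamMin := pos_of_mem_spectrum_posDef hPpd hlamMin.1
  have hlamMaxpos : 0 < lamMax := pos_of_mem_spectrum_posDef hPpd hlamMax.1
  have hmin_le : ∀ μ ∈ spectrum ℝ P, lamMin ≤ μ := fun μ hμ => hlamMin.2 hμ
  have hle_max : ∀ μ ∈ spectrum ℝ P, μ ≤ lamMax := fun μ hμ => hlamMax.2 hμ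
  have hadjP : ContinuousLinearMap.adjoint TP = TP := by
    rw [hTP, adjoint_toEuclideanCLM, hPsymm.eq]
  have hPdecomp : Fᵀ * P * F = P - 1 := by
    have := hLyap
    linear_combination (norm := abel) this
  -- quadratic form identity: ⟪v, P v⟫ = ⟪F v, P (F v)⟫ + ‖v‖²
  have hquadF : ∀ v : EuclideanSpace ℝ (Fin n),
      (inner ℝ (TF v) (TP (TF v)) : ℝ) = inner ℝ v (TP v) - ‖v‖ ^ 2 := by
    intro v
    have h1 : (inner ℝ (TF v) (TP (TF v)) : ℝ)
        = inner ℝ v (Matrix.toEuclideanCLM (𝕜 := ℝ) (Fᵀ * P * F) v) := by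
      rw [_root_.map_mul, _root_.map_mul]
      rw [← adjoint_toEuclideanCLM]
      simp only [ContinuousLinearMap.mul_apply]
      rw [ContinuousLinearMap.adjoint_inner_right]
    rw [h1, hPdecomp, _root_.map_sub, _root_.map_one]
    simp only [ContinuousLinearMap.sub_apply, ContinuousLinearMap.one_apply, inner_sub_right]
    rw [real_inner_self_eq_norm_sq]
  -- lamMax ≥ 1
  have hlamMax1 : (1 : ℝ) ≤ lamMax := by
    set v0 : EuclideanSpace ℝ (Fin n) := EuclideanSpace.single ⟨0, hn⟩ (1 : ℝ) with hv0
    have hnv0 : ‖v0‖ = 1 := by simp [hv0]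
    have hup := quad_upper hP hPsymm hle_max v0
    have hlow := quad_lower hP hPsymm hmin_le (TF v0)
    have hq := hquadF v0
    have h0 : (0 : ℝ) ≤ lamMin * ‖TF v0‖ ^ 2 := by positivity
    rw [hnv0] at hup hq
    nlinarith
  have hlam0 : 0 ≤ lam := by
    rw [hlam]
    have : 1 / (2 * lamMax) ≤ 1 / 2 := by
      apply one_div_le_one_div_of_le <;> linarith
    linarith
  have hlam1 : lam < 1 := by
    rw [hlam]
    have : 0 < 1 / (2 * lamMax) := by positivity
    linarith
  have hone_sub : 1 - lam = 1 / (2 * lamMax) := by rw [hlam]; ring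
  have hbeta0 : 0 ≤ beta := by
    rw [hbeta]
    positivity
  set c : ℝ := beta * α₁ ^ 2 with hc
  have hc0 : 0 ≤ c := by positivity
  set V : ℕ → ℝ := fun t => inner ℝ (x t) (TP (x t)) with hV
  have hVlow : ∀ t, lamMin * ‖x t‖ ^ 2 ≤ V t := fun t => quad_lower hP hPsymm hmin_le (x t)
  have hVup : ∀ t, V t ≤ lamMax * ‖x t‖ ^ 2 := fun t => quad_upper hP hPsymm hle_max (x t)
  have hGnn : ∀ t, (0:ℝ) ≤ ‖G t‖ := fun t => norm_nonneg _
  -- the recurrence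
  have hrec : ∀ t, V (t + 1) ≤ lam * V t + c := by
    intro t
    have hxt := hx t
    have hexp : V (t + 1) = (V t - ‖x t‖ ^ 2) + 2 * inner ℝ (TPF (x t)) (G t)
        + inner ℝ (G t) (TP (G t)) := by
      have hPFapp : TPF (x t) = TP (TF (x t)) := by
        rw [hTPF, _root_.map_mul]; rfl
      have hcross : (inner ℝ (TF (x t)) (TP (G t)) : ℝ) = inner ℝ (TPF (x t)) (G t) := by
        rw [hPFapp, ← hadjP, ContinuousLinearMap.adjoint_inner_left, hadjP]
      have hcross' : (inner ℝ (G t) (TP (TF (x t))) : ℝ) = inner ℝ (TPF (x t)) (G t) := by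
        rw [hPFapp, real_inner_comm]
      simp only [hV, hxt, map_add, inner_add_left, inner_add_right]
      rw [hquadF (x t)] at *
      linarith [hcross, hcross', hquadF (x t)]
    have hb1 : (inner ℝ (TPF (x t)) (G t) : ℝ) ≤ ‖TPF‖ * ‖x t‖ * α₁ := by
      calc (inner ℝ (TPF (x t)) (G t) : ℝ) ≤ ‖TPF (x t)‖ * ‖G t‖ := real_inner_le_norm _ _
        _ ≤ (‖TPF‖ * ‖x t‖) * α₁ := by
            apply mul_le_mul (TPF.le_opNorm (x t)) (hG t) (hGnn t) (by positivity)
    have hb2 : (inner ℝ (G t) (TP (G t)) : ℝ) ≤ ‖TP‖ * α₁ ^ 2 := by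
      calc (inner ℝ (G t) (TP (G t)) : ℝ) ≤ ‖G t‖ * ‖TP (G t)‖ := real_inner_le_norm _ _
        _ ≤ ‖G t‖ * (‖TP‖ * ‖G t‖) :=
            mul_le_mul_of_nonneg_left (TP.le_opNorm (G t)) (hGnn t)
        _ ≤ α₁ * (‖TP‖ * α₁) := by
            apply mul_le_mul (hG t) (mul_le_mul_of_nonneg_left (hG t) (norm_nonneg _))
              (by positivity) hα₁
        _ = ‖TP‖ * α₁ ^ 2 := by ring
    have hamgm := amgm_aux (‖TPF‖ * α₁) ‖x t‖
    have hhalf : V t / (2 * lamMax) ≤ ‖x t‖ ^ 2 / 2 := by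
      rw [div_le_div_iff₀ (by positivity) (by norm_num : (0:ℝ) < 2)]
      nlinarith [hVup t]
    have hlamVt : lam * V t = V t - V t / (2 * lamMax) := by
      rw [hlam]
      field_simp
    have hsq : (‖TPF‖ * α₁) ^ 2 = ‖TPF‖ ^ 2 * α₁ ^ 2 := by ring
    rw [hexp, hc, hbeta, hlamVt]
    linarith [hb1, hb2, hamgm, hhalf, hsq]
  -- geometric bound and limsup
  have hbound := geom_rec_bound hlam0 hlam1 hc0 hrec
  set g : ℕ → ℝ := fun t => (lam ^ t * V 0 + c / (1 - lam)) / lamMin with hg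
  have hfg : ∀ t, ‖x t‖ ^ 2 ≤ g t := by
    intro t
    rw [hg]
    rw [le_div_iff₀ hlamMinpos]
    calc ‖x t‖ ^ 2 * lamMin = lamMin * ‖x t‖ ^ 2 := by ring
      _ ≤ V t := hVlow t
      _ ≤ lam ^ t * V 0 + c / (1 - lam) := hbound t
  have htend : Tendsto g atTop (nhds ((0 * V 0 + c / (1 - lam)) / lamMin)) := by
    apply Tendsto.div_const
    apply Tendsto.add_const
    exact (tendsto_pow_atTop_nhds_zero_of_lt_one hlam0 hlam1).mul_const _
  have hL : (0 * V 0 + c / (1 - lam)) / lamMin = beta * α₁ ^ 2 / (lamMin * (1 - lam)) := by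
    rw [hc, zero_mul, zero_add, div_div, mul_comm (1 - lam) lamMin]
  calc limsup (fun t => ‖x t‖ ^ 2) atTop ≤ limsup g atTop := by
        refine limsup_le_limsup (Eventually.of_forall hfg) ?_ ?_
        · exact isCoboundedUnder_le_of_le atTop (x := 0) fun t => sq_nonneg _
        · exact htend.isBoundedUnder_le
    _ = (0 * V 0 + c / (1 - lam)) / lamMin := htend.limsup_eq
    _ = beta * α₁ ^ 2 / (lamMin * (1 - lam)) := hL
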